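/- arXiv:1304.5142 — 3 statements merged into one kernel-verified Lean document; each statement's English description precedes it below -/
import Mathlib

section
/- Let P and Q be homogeneous polynomials of degree ℓ ≥ 1 in two complex variables z₁, z₂, and let D(P,Q) = (∂P/∂z₁)(∂Q/∂z₂) − (∂P/∂z₂)(∂Q/∂z₁). If P is not identically zero and D(P,Q) is identically zero, then Q = λ·P for some complex constant λ. -/
open MvPolynomial

private lemma jvp_euler_mono (m : Fin 2 →₀ ℕ) (a : ℂ) (i : Fin 2) :
    X i * pderiv i (monomial m a) = monomial m (a * m i) := by
  rw [pderiv_monomial, X, monomial_mul, one_mul]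
  rcases Nat.eq_zero_or_pos (m i) with h | h
  · simp [h]
  · have : Finsupp.single i 1 + (m - Finsupp.single i 1) = m := by
      ext j
      rcases eq_or_ne j i with rfl | hj
      · simp [Finsupp.single_apply]
        omega
      · simp [Finsupp.single_apply, Ne.symm hj, Finsupp.tsub_apply]
    rw [this]

private lemma jvp_degree_eq_add (m : Fin 2 →₀ ℕ) : m.degree = m 0 + m 1 := by
  rw [Finsupp.degree_apply]
  rw [Finset.sum_subset (Finset.subset_univ m.support) (by
    intro x _ hx
    simpa using (Finsupp.notMem_support_iff.mp hx))]
  simp [Fin.sum_univ_two]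

private lemma jvp_euler2 (n : ℕ) (F : MvPolynomial (Fin 2) ℂ) (hF : F.IsHomogeneous n) :
    X 0 * pderiv 0 F + X 1 * pderiv 1 F = C (n : ℂ) * F := by
  conv_lhs => rw [F.as_sum]
  rw [map_sum, map_sum, Finset.mul_sum, Finset.mul_sum, ← Finset.sum_add_distrib]
  conv_rhs => rw [F.as_sum, Finset.mul_sum]
  apply Finset.sum_congr rfl
  intro m hm
  rw [jvp_euler_mono, jvp_euler_mono, C_mul_monomial, ← map_add, ← mul_add, mul_comm (n:ℂ)]
  congr 1
  have hd : m.degree = n := by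
    rw [Finsupp.degree_eq_weight_one]
    exact hF (mem_support_iff.mp hm)
  rw [jvp_degree_eq_add] at hd
  rw [← hd]
  push_cast
  ring

/-- Dehomogenization map `z₁ ↦ X`, `z₂ ↦ 1`. -/
noncomputable def jvpPsi : MvPolynomial (Fin 2) ℂ →ₐ[ℂ] Polynomial ℂ :=
  MvPolynomial.aeval ![Polynomial.X, 1]

private lemma jvpPsi_pderiv (F : MvPolynomial (Fin 2) ℂ) :
    jvpPsi (pderiv 0 F) = Polynomial.derivative (jvpPsi F) := by
  induction F using MvPolynomial.induction_on with
  | C a => simp [jvpPsi]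
  | add p q hp hq => simp [map_add, hp, hq]
  | mul_X p i hp =>
    rw [pderiv_mul, map_add, map_mul, map_mul, map_mul, Polynomial.derivative_mul, hp]
    congr 1
    fin_cases i <;> simp [jvpPsi]

private lemma jvp_prod_eq (d : Fin 2 →₀ ℕ) :
    ∏ i ∈ d.support, (![Polynomial.X, (1:Polynomial ℂ)] i) ^ d i
      = Polynomial.X ^ (d 0) := by
  rw [Finset.prod_subset (Finset.subset_univ d.support) (by
    intro x _ hx
    rw [Finsupp.notMem_support_iff.mp hx, pow_zero])]
  simp [Fin.prod_univ_two]

private lemma jvpPsi_ne_zero {n : ℕ} {F : MvPolynomial (Fin 2) ℂ} (hF : F.IsHomogeneous n)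
    (h0 : F ≠ 0) : jvpPsi F ≠ 0 := by
  obtain ⟨d, hd⟩ : ∃ d, coeff d F ≠ 0 := by
    by_contra h
    push_neg at h
    exact h0 (MvPolynomial.ext _ _ (by simpa using h))
  have hdeg : ∀ m : Fin 2 →₀ ℕ, coeff m F ≠ 0 → m 0 + m 1 = n := by
    intro m hm
    rw [← jvp_degree_eq_add, Finsupp.degree_eq_weight_one]
    exact hF hm
  have huniq : ∀ m : Fin 2 →₀ ℕ, coeff m F ≠ 0 → m 0 = d 0 → m = d := by
    intro m hm h0'
    have h1 : m 1 = d 1 := by have := hdeg m hm; have := hdeg d hd; omega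
    ext j
    fin_cases j
    · exact h0'
    · exact h1
  have key : (jvpPsi F).coeff (d 0) = coeff d F := by
    rw [jvpPsi, aeval_def, eval₂_eq, Polynomial.finset_sum_coeff]
    rw [Finset.sum_eq_single d]
    · rw [jvp_prod_eq]
      simp [Polynomial.coeff_C_mul, Polynomial.coeff_X_pow]
    · intro m hm hne
      rw [jvp_prod_eq]
      have : m 0 ≠ d 0 := fun h =>
        hne (huniq m (mem_support_iff.mp hm) h)
      simp [Polynomial.coeff_C_mul, Polynomial.coeff_X_pow, Ne.symm this]
    · intro h
      exact absurd (mem_support_iff.mpr hd) h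
  intro h
  rw [h] at key
  simp at key
  exact hd key.symm

private lemma jvp_wronskian_univ (p q : Polynomial ℂ) (hp : p ≠ 0)
    (h : p * Polynomial.derivative q = q * Polynomial.derivative p) :
    ∃ c : ℂ, q = Polynomial.C c * p := by
  obtain ⟨p₁, q₁, c, hrel, hcp, hcq⟩ :=
    UniqueFactorizationMonoid.exists_reduced_factors p hp q
  have hc : c ≠ 0 := fun h0 => hp (by rw [← hcp, h0, zero_mul])
  have hp₁ : p₁ ≠ 0 := fun h0 => hp (by rw [← hcp, h0, mul_zero])
  have hred : p₁ * Polynomial.derivative q₁ = q₁ * Polynomial.derivative p₁ := by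
    have h2 : c * c * (p₁ * Polynomial.derivative q₁)
        = c * c * (q₁ * Polynomial.derivative p₁) := by
      have := h
      rw [← hcp, ← hcq] at this
      rw [Polynomial.derivative_mul, Polynomial.derivative_mul] at this
      ring_nf at this ⊢
      linear_combination this
    exact mul_left_cancel₀ (mul_ne_zero hc hc) h2
  have hdvd : p₁ ∣ Polynomial.derivative p₁ := by
    have : p₁ ∣ q₁ * Polynomial.derivative p₁ := ⟨Polynomial.derivative q₁, hred.symm⟩
    exact hrel.dvd_of_dvd_mul_left this
  have hdp : Polynomial.derivative p₁ = 0 :=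
    Polynomial.eq_zero_of_dvd_of_degree_lt hdvd (Polynomial.degree_derivative_lt hp₁)
  have hdq : Polynomial.derivative q₁ = 0 := by
    have : p₁ * Polynomial.derivative q₁ = 0 := by rw [hred, hdp, mul_zero]
    exact (mul_eq_zero.mp this).resolve_left hp₁
  have hap : p₁.natDegree = 0 := Polynomial.natDegree_eq_zero_of_derivative_eq_zero hdp
  have haq : q₁.natDegree = 0 := Polynomial.natDegree_eq_zero_of_derivative_eq_zero hdq
  set a := p₁.coeff 0 with ha
  set b := q₁.coeff 0 with hb
  have hpa : p₁ = Polynomial.C a := Polynomial.eq_C_of_natDegree_eq_zero hap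
  have hqb : q₁ = Polynomial.C b := Polynomial.eq_C_of_natDegree_eq_zero haq
  have ha0 : a ≠ 0 := fun h0 => hp₁ (by rw [hpa, h0, map_zero])
  refine ⟨b / a, ?_⟩
  rw [← hcq, ← hcp, hpa, hqb]
  rw [← mul_assoc, mul_comm (Polynomial.C (b/a)) c, mul_assoc, ← map_mul]
  congr 1
  field_simp

theorem jacobian_vanishing_implies_proportional
    (ℓ : ℕ) (hℓ : 1 ≤ ℓ) (P Q : MvPolynomial (Fin 2) ℂ)
    (hP : P.IsHomogeneous ℓ) (hQ : Q.IsHomogeneous ℓ)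
    (hP0 : P ≠ 0)
    (hD : pderiv 0 P * pderiv 1 Q - pderiv 1 P * pderiv 0 Q = 0) :
    ∃ lam : ℂ, Q = lam • P := by
  have hEP := jvp_euler2 ℓ P hP
  have hEQ := jvp_euler2 ℓ Q hQ
  have hCl : (C (ℓ:ℂ) : MvPolynomial (Fin 2) ℂ) ≠ 0 := by
    simp only [ne_eq, C_eq_zero, Nat.cast_eq_zero]
    omega
  have E0 : P * pderiv 0 Q = Q * pderiv 0 P := by
    apply mul_left_cancel₀ hCl
    linear_combination (pderiv 0 P) * hEQ - (pderiv 0 Q) * hEP - X 1 * hD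
  have hpsirel : jvpPsi P * Polynomial.derivative (jvpPsi Q)
      = jvpPsi Q * Polynomial.derivative (jvpPsi P) := by
    rw [← jvpPsi_pderiv, ← jvpPsi_pderiv, ← map_mul, ← map_mul, E0]
  obtain ⟨c, hc⟩ := jvp_wronskian_univ _ _ (jvpPsi_ne_zero hP hP0) hpsirel
  refine ⟨c, ?_⟩
  have hR : (Q - C c * P).IsHomogeneous ℓ := by
    have := (isHomogeneous_C (Fin 2) c).mul hP
    rw [zero_add] at this
    exact hQ.sub this
  have hpsiR : jvpPsi (Q - C c * P) = 0 := by
    rw [map_sub, map_mul, hc]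
    have : jvpPsi (C c) = Polynomial.C c := by simp [jvpPsi]
    rw [this]
    ring
  have : Q - C c * P = 0 := by
    by_contra hne
    exact jvpPsi_ne_zero hR hne hpsiR
  rw [smul_eq_C_mul]
  exact sub_eq_zero.mp this
end

section
/- Let G be a compact group acting unitarily on a finite-dimensional Hilbert space H, J a conjugation on H as above with ⟨Jv,Jw⟩ = conj(⟨v,w⟩), and (h_k)_{−ℓ ≤ k ≤ ℓ} an orthonormal basis with h_{−k} = J(h_k). Let D_{jk}(g) = ⟨g·h_k, h_j⟩. Then for all g ∈ G and indices s, m: ⟨ g·(h_s ∧ h_{−s}), h_m ∧ h_{−m} ⟩₂ = |D_{m,s}(g)|² − |D_{m,−s}(g)|², where ⟨v₁∧w₁, v₂∧w₂⟩₂ = ⟨v₁,v₂⟩⟨w₁,w₂⟩ − ⟨v₁,w₂⟩⟨w₁,v₂⟩ is the induced inner product on Λ²H. In particular |D_{m,s}(g)| = |D_{m,−s}(g)| if and only if g·(h_s ∧ h_{−s}) is orthogonal to h_m ∧ h_{−m}. -/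
/-- Index set `{-ℓ, …, ℓ}` (so `d = 2ℓ+1`). -/
abbrev Idx (ℓ : ℕ) : Type := (Finset.Icc (-(ℓ : ℤ)) (ℓ : ℤ) : Finset ℤ)

/-- Negation on the index set. -/
def negI {ℓ : ℕ} (k : Idx ℓ) : Idx ℓ :=
  ⟨-(k : ℤ), by have := k.2; simp only [Finset.mem_Icc] at *; omega⟩

/-- The exterior-square inner-product identity
`⟨g(h_s ∧ h_{-s}), h_m ∧ h_{-m}⟩₂ = |D_{m,s}(g)|² − |D_{m,-s}(g)|²`,
where `D_{j,k}(g) = ⟨g h_k, h_j⟩`, together with the resulting orthogonality criterion. -/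
theorem wedge_inner_eq_moduli_difference
    {G : Type*} [Group G]
    {H : Type*} [NormedAddCommGroup H] [InnerProductSpace ℂ H]
    (ρ : G →* (H ≃ₗᵢ[ℂ] H)) (ℓ : ℕ)
    (h : Idx ℓ → H) (hON : Orthonormal ℂ h)
    (J : H → H)
    (hconj : ∀ v w : H, (inner ℂ (J v) (J w) : ℂ) = starRingEnd ℂ (inner ℂ v w))
    (hequi : ∀ g v, J (ρ g v) = ρ g (J v))
    (hself : ∀ k, h (negI k) = J (h k))
    (g : G) (s m : Idx ℓ) :
    (inner ℂ (ρ g (h s)) (h m) : ℂ) * inner ℂ (ρ g (h (negI s))) (h (negI m))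
        - inner ℂ (ρ g (h s)) (h (negI m)) * inner ℂ (ρ g (h (negI s))) (h m)
      = (((‖(inner ℂ (ρ g (h s)) (h m) : ℂ)‖) ^ 2
          - (‖(inner ℂ (ρ g (h (negI s))) (h m) : ℂ)‖) ^ 2 : ℝ) : ℂ) ∧
    ((inner ℂ (ρ g (h s)) (h m) : ℂ) * inner ℂ (ρ g (h (negI s))) (h (negI m))
        - inner ℂ (ρ g (h s)) (h (negI m)) * inner ℂ (ρ g (h (negI s))) (h m) = 0
      ↔ ‖(inner ℂ (ρ g (h s)) (h m) : ℂ)‖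
          = ‖(inner ℂ (ρ g (h (negI s))) (h m) : ℂ)‖) := by

  have hinv : negI (negI m) = m := by
    apply Subtype.ext; simp [negI]
  have key : ∀ k j : Idx ℓ, (inner ℂ (ρ g (h (negI k))) (h (negI j)) : ℂ)
      = starRingEnd ℂ (inner ℂ (ρ g (h k)) (h j)) := by
    intro k j
    rw [hself, hself, ← hequi, hconj]
  set a : ℂ := inner ℂ (ρ g (h s)) (h m) with ha
  set b : ℂ := inner ℂ (ρ g (h s)) (h (negI m)) with hb
  have e1 : (inner ℂ (ρ g (h (negI s))) (h (negI m)) : ℂ) = starRingEnd ℂ a := key s m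
  have e2 : (inner ℂ (ρ g (h (negI s))) (h m) : ℂ) = starRingEnd ℂ b := by
    have := key s (negI m); rwa [hinv] at this
  rw [e1, e2]
  have habs : ∀ z : ℂ, z * starRingEnd ℂ z = ((‖z‖ ^ 2 : ℝ) : ℂ) := by
    intro z
    rw [Complex.mul_conj, Complex.normSq_eq_norm_sq]
  have hb2 : ‖starRingEnd ℂ b‖ = ‖b‖ := Complex.norm_conj b
  constructor
  · rw [habs a, habs b, hb2]
    push_cast; ring
  · rw [habs a, habs b, hb2, ← Complex.ofReal_sub]
    rw [Complex.ofReal_eq_zero, sub_eq_zero]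
    constructor
    · intro hh
      nlinarith [norm_nonneg a, norm_nonneg b]
    · intro hh; rw [hh]
end

section
/- With the notation of the SU(2)-module H_ℓ and orthonormal basis e_s = √(binom(ℓ,s)) z₁ˢ z₂^{ℓ−s}, for g ∈ SU(2) with entries a, b one has |⟨g·e_s, e_j⟩|² = (binom(ℓ,s)/binom(ℓ,j)) · ( Σ_h binom(s,h)·binom(ℓ−s, j−h)·|a|^{ℓ−s−j+2h}·|b|^{s+j−2h}·(−1)^{s−h} )², where the sum runs over max(0, s+j−ℓ) ≤ h ≤ min(s, j). In particular |⟨g·e_s, e_j⟩|² is a polynomial function of (|a|, |b|) alone, homogeneous of degree 2ℓ. -/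
open MvPolynomial

/-- Action of a `2×2` matrix `g` on polynomials in two variables: `(g·p)(z) = p(z·g)`. -/
noncomputable def matAct (g : Matrix (Fin 2) (Fin 2) ℂ) (p : MvPolynomial (Fin 2) ℂ) :
    MvPolynomial (Fin 2) ℂ :=
  aeval (fun i => ∑ j, C (g j i) * X j) p

/-- The hermitian form on degree-`ℓ` homogeneous polynomials determined by
`⟨z₁ˢz₂^{ℓ−s}, z₁ʳz₂^{ℓ−r}⟩ = δ_{sr} · s!(ℓ−s)!/ℓ!`. -/
noncomputable def polyInner (ℓ : ℕ) (p q : MvPolynomial (Fin 2) ℂ) : ℂ :=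
  ∑ s ∈ Finset.range (ℓ + 1),
    coeff (Finsupp.single 0 s + Finsupp.single 1 (ℓ - s)) p
      * starRingEnd ℂ (coeff (Finsupp.single 0 s + Finsupp.single 1 (ℓ - s)) q)
      * ((s.factorial * (ℓ - s).factorial : ℂ) / (ℓ.factorial : ℂ))

/-- The orthonormal basis element `e_s = √(binom ℓ s) · z₁ˢ z₂^{ℓ−s}`. -/
noncomputable def eBasis (ℓ s : ℕ) : MvPolynomial (Fin 2) ℂ :=
  (Real.sqrt (ℓ.choose s) : ℂ) • (X 0 ^ s * X 1 ^ (ℓ - s))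


section Aux
open Finset


noncomputable def mono2 (p q : ℕ) (c : ℂ) : MvPolynomial (Fin 2) ℂ :=
  monomial (Finsupp.single 0 p + Finsupp.single 1 q) c

lemma mono2_mul (p q p' q' : ℕ) (c c' : ℂ) :
    mono2 p q c * mono2 p' q' c' = mono2 (p + p') (q + q') (c * c') := by
  simp only [mono2, monomial_mul]
  congr 1
  rw [Finsupp.single_add, Finsupp.single_add]
  abel

lemma single2_inj {p q p' q' : ℕ} 
    (h : (Finsupp.single (0 : Fin 2) p' + Finsupp.single 1 q') 
        = Finsupp.single (0 : Fin 2) p + Finsupp.single 1 q) : p = p' ∧ q = q' := by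
  have h0 := congrFun (congrArg (DFunLike.coe) h) 0
  have h1 := congrFun (congrArg (DFunLike.coe) h) 1
  simp [Finsupp.single_apply] at h0 h1
  exact ⟨h0.symm, h1.symm⟩

lemma coeff_mono2 (p q p' q' : ℕ) (c : ℂ) :
    coeff (Finsupp.single 0 p + Finsupp.single 1 q) (mono2 p' q' c)
      = if p = p' ∧ q = q' then c else 0 := by
  rw [mono2, coeff_monomial]
  congr 1
  simp only [eq_iff_iff]
  constructor
  · exact single2_inj
  · rintro ⟨rfl, rfl⟩; rfl

lemma mono2_eq (p q : ℕ) (c : ℂ) : mono2 p q c = C c * X 0 ^ p * X 1 ^ q := by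
  rw [mono2, X_pow_eq_monomial, X_pow_eq_monomial, C_mul_monomial, monomial_mul,
    mul_one]
  ring_nf

lemma binom_expand (a c : ℂ) (n : ℕ) :
    (C a * X 0 + C c * X 1 : MvPolynomial (Fin 2) ℂ) ^ n
      = ∑ k ∈ range (n + 1), mono2 k (n - k) (a ^ k * c ^ (n - k) * (n.choose k : ℂ)) := by
  rw [add_pow]
  refine Finset.sum_congr rfl fun k hk => ?_
  rw [mono2_eq, mul_pow, mul_pow, ← C_pow, ← C_pow, ← C_eq_coe_nat]
  simp only [C_mul]
  ring

lemma coeff_prod (ℓ s j : ℕ) (hs : s ≤ ℓ) (hj : j ≤ ℓ) (a b c d : ℂ) :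
    coeff (Finsupp.single 0 j + Finsupp.single 1 (ℓ - j))
      ((C a * X 0 + C c * X 1 : MvPolynomial (Fin 2) ℂ) ^ s * (C b * X 0 + C d * X 1) ^ (ℓ - s))
    = ∑ h ∈ Finset.Icc (s + j - ℓ) (min s j),
        a ^ h * c ^ (s - h) * (s.choose h : ℂ)
          * (b ^ (j - h) * d ^ ((ℓ - s) - (j - h)) * ((ℓ - s).choose (j - h) : ℂ)) := by
  rw [binom_expand a c s, binom_expand b d (ℓ - s), Finset.sum_mul_sum]
  simp only [mono2_mul, coeff_sum, coeff_mono2]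
  have step : ∀ k ∈ Finset.range (s + 1),
      (∑ m ∈ Finset.range (ℓ - s + 1),
        if j = k + m ∧ ℓ - j = s - k + (ℓ - s - m) then
          a ^ k * c ^ (s - k) * (s.choose k : ℂ) * (b ^ m * d ^ (ℓ - s - m) * ((ℓ - s).choose m : ℂ))
        else 0)
      = if k ≤ j ∧ j - k ≤ ℓ - s then
          a ^ k * c ^ (s - k) * (s.choose k : ℂ)
            * (b ^ (j - k) * d ^ (ℓ - s - (j - k)) * ((ℓ - s).choose (j - k) : ℂ))
        else 0 := by
    intro k hk
    rw [Finset.mem_range] at hk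
    by_cases hc : k ≤ j ∧ j - k ≤ ℓ - s
    · rw [Finset.sum_eq_single (j - k)]
      · rw [if_pos (by omega), if_pos hc]
      · intro m hm hne
        rw [Finset.mem_range] at hm
        rw [if_neg (by omega)]
      · intro hnot
        exact absurd (Finset.mem_range.2 (by omega)) hnot
    · rw [if_neg hc]
      refine Finset.sum_eq_zero fun m hm => ?_
      rw [Finset.mem_range] at hm
      rw [if_neg (by omega)]
  rw [Finset.sum_congr rfl step, ← Finset.sum_filter]
  refine Finset.sum_congr ?_ fun k hk => rfl
  ext k
  simp only [Finset.mem_filter, Finset.mem_range, Finset.mem_Icc, le_min_iff]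
  omega

lemma eBasis_eq (ℓ j : ℕ) :
    eBasis ℓ j = mono2 j (ℓ - j) ((Real.sqrt (ℓ.choose j) : ℂ)) := by
  rw [eBasis, mono2_eq, smul_eq_C_mul, mul_assoc]

lemma polyInner_eBasis (ℓ j : ℕ) (hj : j ≤ ℓ) (p : MvPolynomial (Fin 2) ℂ) :
    polyInner ℓ p (eBasis ℓ j)
      = coeff (Finsupp.single 0 j + Finsupp.single 1 (ℓ - j)) p
          * (Real.sqrt (ℓ.choose j) : ℂ)
          * ((j.factorial * (ℓ - j).factorial : ℂ) / (ℓ.factorial : ℂ)) := by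
  rw [polyInner, Finset.sum_eq_single j]
  · rw [eBasis_eq, coeff_mono2, if_pos ⟨rfl, rfl⟩, Complex.conj_ofReal]
  · intro m hm hne
    rw [eBasis_eq, coeff_mono2, if_neg (fun hc => hne hc.1), map_zero, mul_zero, zero_mul]
  · intro hnot
    exact absurd (Finset.mem_range.2 (by omega)) hnot

lemma matAct_eBasis (ℓ s : ℕ) (a b : ℂ) :
    matAct !![a, b; -(starRingEnd ℂ b), starRingEnd ℂ a] (eBasis ℓ s)
      = (Real.sqrt (ℓ.choose s) : ℂ) •
          ((C a * X 0 + C (-(starRingEnd ℂ b)) * X 1 : MvPolynomial (Fin 2) ℂ) ^ s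
            * (C b * X 0 + C (starRingEnd ℂ a) * X 1) ^ (ℓ - s)) := by
  rw [eBasis, matAct, smul_eq_C_mul, smul_eq_C_mul, map_mul, map_mul, map_pow, map_pow,
    aeval_C, aeval_X, aeval_X]
  simp [Fin.sum_univ_two]

lemma zconj_self (z : ℂ) (h : ℕ) :
    z ^ h * (starRingEnd ℂ z) ^ h = ((‖z‖ : ℂ)) ^ (2 * h) := by
  rw [← mul_pow, Complex.mul_conj, ← Complex.sq_norm]
  push_cast
  rw [← pow_mul]

lemma zconj_phase (z : ℂ) (p q : ℕ) :
    z ^ p * (starRingEnd ℂ z) ^ q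
      = (if q ≤ p then z ^ (p - q) else (starRingEnd ℂ z) ^ (q - p))
          * ((‖z‖ : ℂ)) ^ ((p + q) - ((p - q) + (q - p))) := by
  by_cases h : q ≤ p
  · rw [if_pos h, show (p + q) - ((p - q) + (q - p)) = 2 * q by omega,
      show p = (p - q) + q by omega, pow_add, mul_assoc, zconj_self]
    rw [show p - q + q - q = p - q by omega]
  · rw [if_neg h, show (p + q) - ((p - q) + (q - p)) = 2 * p by omega,
      show q = (q - p) + p by omega, pow_add]
    rw [show q - p + p - p = q - p by omega, ← mul_assoc, mul_comm (z ^ p), mul_assoc,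
      zconj_self]

lemma phase_eq (z : ℂ) (p q p' q' : ℕ) (hpq : p + q' = p' + q) :
    (if q ≤ p then z ^ (p - q) else (starRingEnd ℂ z) ^ (q - p))
      = (if q' ≤ p' then z ^ (p' - q') else (starRingEnd ℂ z) ^ (q' - p')) := by
  by_cases h : q ≤ p
  · rw [if_pos h, if_pos (by omega), show p - q = p' - q' by omega]
  · rw [if_neg h, if_neg (by omega), show q - p = q' - p' by omega]

lemma absS (ℓ s j : ℕ) (hs : s ≤ ℓ) (hj : j ≤ ℓ) (a b : ℂ) :
    (‖∑ h ∈ Finset.Icc (s + j - ℓ) (min s j),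
        a ^ h * (-(starRingEnd ℂ b)) ^ (s - h) * (s.choose h : ℂ)
          * (b ^ (j - h) * (starRingEnd ℂ a) ^ ((ℓ - s) - (j - h))
              * ((ℓ - s).choose (j - h) : ℂ))‖) ^ 2
    = (∑ h ∈ Finset.Icc (s + j - ℓ) (min s j),
        (s.choose h : ℝ) * ((ℓ - s).choose (j - h) : ℝ)
          * ‖a‖ ^ (ℓ + 2 * h - s - j) * ‖b‖ ^ (s + j - 2 * h)
          * (-1 : ℝ) ^ (s - h)) ^ 2 := by
  set u := ‖a‖ with hu
  set v := ‖b‖ with hv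
  set dA := (ℓ - s - j) + (s + j - ℓ) with hdA
  set dB := (j - s) + (s - j) with hdB
  set PA : ℂ := if ℓ ≤ s + j then a ^ (s + j - ℓ) else (starRingEnd ℂ a) ^ (ℓ - (s + j)) with hPA
  set PB : ℂ := if s ≤ j then b ^ (j - s) else (starRingEnd ℂ b) ^ (s - j) with hPB
  set R : ℝ := ∑ h ∈ Finset.Icc (s + j - ℓ) (min s j),
      (s.choose h : ℝ) * ((ℓ - s).choose (j - h) : ℝ)
        * u ^ ((ℓ + 2 * h - s - j) - dA) * v ^ ((s + j - 2 * h) - dB)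
        * (-1 : ℝ) ^ (s - h) with hR
  have hS : (∑ h ∈ Finset.Icc (s + j - ℓ) (min s j),
        a ^ h * (-(starRingEnd ℂ b)) ^ (s - h) * (s.choose h : ℂ)
          * (b ^ (j - h) * (starRingEnd ℂ a) ^ ((ℓ - s) - (j - h))
              * ((ℓ - s).choose (j - h) : ℂ)))
      = PA * PB * ((R : ℝ) : ℂ) := by
    rw [hR]
    push_cast
    rw [Finset.mul_sum]
    apply Finset.sum_congr rfl
    intro h hh
    rw [Finset.mem_Icc, le_min_iff] at hh
    have ha : a ^ h * (starRingEnd ℂ a) ^ ((ℓ - s) - (j - h))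
        = PA * ((u : ℝ) : ℂ) ^ ((ℓ + 2 * h - s - j) - dA) := by
      rw [zconj_phase, phase_eq a h ((ℓ - s) - (j - h)) (s + j) ℓ (by omega),
        show (h + ((ℓ - s) - (j - h))) - ((h - ((ℓ - s) - (j - h))) + (((ℓ - s) - (j - h)) - h))
          = (ℓ + 2 * h - s - j) - dA from by omega, hPA, hu]
    have hb : b ^ (j - h) * (starRingEnd ℂ b) ^ (s - h)
        = PB * ((v : ℝ) : ℂ) ^ ((s + j - 2 * h) - dB) := by
      rw [zconj_phase, phase_eq b (j - h) (s - h) j s (by omega),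
        show ((j - h) + (s - h)) - (((j - h) - (s - h)) + ((s - h) - (j - h)))
          = (s + j - 2 * h) - dB from by omega, hPB, hv]
    calc a ^ h * (-(starRingEnd ℂ b)) ^ (s - h) * (s.choose h : ℂ)
          * (b ^ (j - h) * (starRingEnd ℂ a) ^ ((ℓ - s) - (j - h))
              * ((ℓ - s).choose (j - h) : ℂ))
        = (a ^ h * (starRingEnd ℂ a) ^ ((ℓ - s) - (j - h)))
            * (b ^ (j - h) * (starRingEnd ℂ b) ^ (s - h))
            * ((-1 : ℂ) ^ (s - h) * (s.choose h : ℂ) * ((ℓ - s).choose (j - h) : ℂ)) := by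
          rw [neg_pow]; ring
      _ = _ := by rw [ha, hb]; push_cast; ring
  rw [hS]
  have habsPA : ‖PA‖ = u ^ dA := by
    rw [hPA, hdA]
    by_cases h : ℓ ≤ s + j
    · rw [if_pos h, norm_pow, show (ℓ - s - j) + (s + j - ℓ) = s + j - ℓ from by omega]
    · rw [if_neg h, norm_pow, Complex.norm_conj,
        show (ℓ - s - j) + (s + j - ℓ) = ℓ - (s + j) from by omega]
  have habsPB : ‖PB‖ = v ^ dB := by
    rw [hPB, hdB]
    by_cases h : s ≤ j
    · rw [if_pos h, norm_pow, show (j - s) + (s - j) = j - s from by omega]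
    · rw [if_neg h, norm_pow, Complex.norm_conj,
        show (j - s) + (s - j) = s - j from by omega]
  rw [norm_mul, norm_mul, Complex.norm_real, Real.norm_eq_abs, habsPA, habsPB]
  have hT : (∑ h ∈ Finset.Icc (s + j - ℓ) (min s j),
        (s.choose h : ℝ) * ((ℓ - s).choose (j - h) : ℝ)
          * u ^ (ℓ + 2 * h - s - j) * v ^ (s + j - 2 * h) * (-1 : ℝ) ^ (s - h))
      = u ^ dA * v ^ dB * R := by
    rw [hR, Finset.mul_sum]
    refine Finset.sum_congr rfl fun h hh => ?_
    rw [Finset.mem_Icc, le_min_iff] at hh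
    rw [show u ^ (ℓ + 2 * h - s - j) = u ^ dA * u ^ ((ℓ + 2 * h - s - j) - dA) from by
        rw [← pow_add]; congr 1; omega,
      show v ^ (s + j - 2 * h) = v ^ dB * v ^ ((s + j - 2 * h) - dB) from by
        rw [← pow_add]; congr 1; omega]
    ring
  rw [hT]
  rw [mul_pow, mul_pow, mul_pow, mul_pow, sq_abs]


end Aux

open Finset in
theorem matrix_coefficient_modulus_formula (ℓ s j : ℕ) (hs : s ≤ ℓ) (hj : j ≤ ℓ)
    (a b : ℂ) (hab : ‖a‖ ^ 2 + ‖b‖ ^ 2 = 1) :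
    (‖polyInner ℓ
        (matAct !![a, b; -(starRingEnd ℂ b), starRingEnd ℂ a] (eBasis ℓ s))
        (eBasis ℓ j)‖) ^ 2
      = ((ℓ.choose s : ℝ) / (ℓ.choose j : ℝ))
          * (∑ h ∈ Finset.Icc (s + j - ℓ) (min s j),
              (s.choose h : ℝ) * ((ℓ - s).choose (j - h) : ℝ)
                * ‖a‖ ^ (ℓ + 2 * h - s - j)
                * ‖b‖ ^ (s + j - 2 * h)
                * (-1 : ℝ) ^ (s - h)) ^ 2 := by
  have hco : coeff (Finsupp.single 0 j + Finsupp.single 1 (ℓ - j))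
      (matAct !![a, b; -(starRingEnd ℂ b), starRingEnd ℂ a] (eBasis ℓ s))
      = (Real.sqrt (ℓ.choose s) : ℂ) *
          (∑ h ∈ Finset.Icc (s + j - ℓ) (min s j),
            a ^ h * (-(starRingEnd ℂ b)) ^ (s - h) * (s.choose h : ℂ)
              * (b ^ (j - h) * (starRingEnd ℂ a) ^ ((ℓ - s) - (j - h))
                  * ((ℓ - s).choose (j - h) : ℂ))) := by
    rw [matAct_eBasis, coeff_smul, smul_eq_mul]
    congr 1
    exact coeff_prod ℓ s j hs hj a b (-(starRingEnd ℂ b)) (starRingEnd ℂ a)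
  rw [polyInner_eBasis ℓ j hj, hco]
  rw [show ((j.factorial * (ℓ - j).factorial : ℂ) / (ℓ.factorial : ℂ))
      = (((j.factorial * (ℓ - j).factorial : ℝ) / (ℓ.factorial : ℝ) : ℝ) : ℂ) from by
    push_cast; ring]
  rw [norm_mul, norm_mul, norm_mul, Complex.norm_real, Complex.norm_real, Complex.norm_real,
    Real.norm_eq_abs, Real.norm_eq_abs, Real.norm_eq_abs,
    abs_of_nonneg (Real.sqrt_nonneg _), abs_of_nonneg (Real.sqrt_nonneg _),
    abs_of_nonneg (by positivity :
      (0:ℝ) ≤ (j.factorial * (ℓ - j).factorial : ℝ) / (ℓ.factorial : ℝ))]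
  rw [mul_pow, mul_pow, mul_pow, Real.sq_sqrt (by positivity), Real.sq_sqrt (by positivity),
    absS ℓ s j hs hj a b]
  have hCj0 : (ℓ.choose j : ℝ) ≠ 0 := Nat.cast_ne_zero.2 (Nat.choose_pos hj).ne'
  have hl0 : (ℓ.factorial : ℝ) ≠ 0 := Nat.cast_ne_zero.2 ℓ.factorial_ne_zero
  have hCj : (ℓ.choose j : ℝ) * ((j.factorial : ℝ) * (ℓ - j).factorial) = (ℓ.factorial : ℝ) := by
    have := Nat.choose_mul_factorial_mul_factorial hj
    push_cast [← this]
    ring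
  have hw : ((j.factorial * (ℓ - j).factorial : ℝ) / (ℓ.factorial : ℝ))
      = 1 / (ℓ.choose j : ℝ) := by
    rw [div_eq_div_iff hl0 hCj0]
    linear_combination hCj
  rw [hw]
  field_simp
end
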